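/- A channel system S has a lossy computation ending in the configuration (q_f, w_f) if and only if there exists a lossy computation encoding ending in (q_f, w_f), i.e., a timed word over the alphabet Σ̄ = Q ∪ Σ ∪ Δ satisfying conditions (P1)–(P3c). -/

import Mathlib

/-- A channel operation: write a letter (to the front of the channel), read
a letter (from the end of the channel), or a silent move. -/
inductive ChanOp (A : Type) : Type where
  | write : A → ChanOp A
  | read : A → ChanOp A
  | eps : ChanOp A

/-- A (one-channel) channel system: control states `Q`, initial state,
channel alphabet `A`, and a finite list of rules `(q, op, q')`; no rule
returns to the initial state. -/
structure ChannelSystem (Q A : Type) where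
  init : Q
  rules : List (Q × ChanOp A × Q)
  no_return : ∀ r ∈ rules, r.2.2 ≠ init

/-- A perfect transition between configurations `(state, channel content)`
via rule `γ`. -/
def PerfectStep {Q A : Type} (S : ChannelSystem Q A) (γ : Q × ChanOp A × Q)
    (c c' : Q × List A) : Prop :=
  γ ∈ S.rules ∧ γ.1 = c.1 ∧ γ.2.2 = c'.1 ∧
    match γ.2.1 with
    | ChanOp.eps => c'.2 = c.2
    | ChanOp.write a => c'.2 = a :: c.2
    | ChanOp.read a => c.2 = c'.2 ++ [a]

/-- A lossy transition: an arbitrary subword of the channel may be lost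
before and after a perfect step (`List.Sublist` is the scattered subword
ordering). -/
def LossyStep {Q A : Type} (S : ChannelSystem Q A) (γ : Q × ChanOp A × Q)
    (c c' : Q × List A) : Prop :=
  ∃ u u' : List A, u.Sublist c.2 ∧ PerfectStep S γ (c.1, u) (c'.1, u') ∧ c'.2.Sublist u'

/-- `S` has a lossy computation from the initial configuration `(q₀, ε)`
ending in `c`. -/
def LossyReach {Q A : Type} (S : ChannelSystem Q A) (c : Q × List A) : Prop :=
  Relation.ReflTransGen (fun c₁ c₂ => ∃ γ, LossyStep S γ c₁ c₂) (S.init, []) c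

/-- The alphabet `Σ̄ = Q ∪ Σ ∪ Δ` of computation encodings. -/
abbrev CSig (Q A : Type) : Type := Q ⊕ A ⊕ (Q × ChanOp A × Q)

/-- Shift all (absolute) time-stamps of a timed word by one time unit. -/
def shift1 {A : Type} (v : List (A × NNReal)) : List (A × NNReal) :=
  v.map fun p => (p.1, p.2 + 1)

/-- The block of the encoding carrying configuration `i` (out of `n`): the
control state `q i` at time `n - i`, the rule `γ i` at time `t' i`, and the
timed word `v i` encoding the channel content. -/
def chanBlock {Q A : Type} (n : ℕ) (q : ℕ → Q) (γ : ℕ → Q × ChanOp A × Q)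
    (t' : ℕ → NNReal) (v : ℕ → List (A × NNReal)) (i : ℕ) :
    List (CSig Q A × NNReal) :=
  (Sum.inl (q i), ((n - i : ℕ) : NNReal)) :: (Sum.inr (Sum.inr (γ i)), t' i) ::
    ((v i).map fun p => (Sum.inr (Sum.inl p.1), p.2))

/-- A lossy computation encoding ending in `(qf, wf)`: a timed word (with
absolute time-stamps) of the shape
`(q_n,t_n)(γ_n,t'_n)v_n ⋯ (q_1,t_1)(γ_1,t'_1)v_1 (q_0,t_0)`
satisfying the conditions (P1), (P2), (P3a), (P3b), (P3c). -/
def IsLossyEncoding {Q A : Type} (S : ChannelSystem Q A) (qf : Q) (wf : List A)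
    (w : List (CSig Q A × NNReal)) : Prop :=
  ∃ (n : ℕ) (q : ℕ → Q) (γ : ℕ → Q × ChanOp A × Q) (t' : ℕ → NNReal)
    (v : ℕ → List (A × NNReal)),
    1 ≤ n ∧
    -- the shape of the word: blocks n, n-1, …, 1, then `q 0` at time `n`
    w = ((List.range n).map fun j => chanBlock n q γ t' v (n - j)).flatten
        ++ [(Sum.inl (q 0), (n : NNReal))] ∧
    q 0 = S.init ∧ v 0 = [] ∧
    -- (P1) structure
    q n = qf ∧ (v n).map Prod.fst = wf ∧
    (∀ i, 1 ≤ i → i ≤ n →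
      γ i ∈ S.rules ∧ (γ i).1 = q (i - 1) ∧ (γ i).2.2 = q i) ∧
    -- (P2) distribution in time
    (∀ i, 1 ≤ i → i ≤ n →
      ((n - i : ℕ) : NNReal) < t' i ∧ t' i < ((n - i : ℕ) : NNReal) + 1 ∧
      List.Chain' (· < ·) (t' i :: (v i).map Prod.snd) ∧
      ∀ s ∈ (v i).map Prod.snd, s < ((n - i : ℕ) : NNReal) + 1) ∧
    -- (P3a), (P3b), (P3c)
    (∀ i, 1 ≤ i → i ≤ n →
      match (γ i).2.1 with
      | ChanOp.eps => (shift1 (v i)).Sublist (v (i - 1))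
      | ChanOp.write a =>
          (∃ u rest, v i = (a, u) :: rest ∧ (shift1 rest).Sublist (v (i - 1))) ∨
          (shift1 (v i)).Sublist (v (i - 1))
      | ChanOp.read a =>
          ∃ (v₁ v₂ : List (A × NNReal)) (t : NNReal),
            v (i - 1) = v₁ ++ (a, t) :: v₂ ∧ (shift1 (v i)).Sublist v₁)

section LossyAux

variable {Q A : Type}

lemma shift1_map_fst (v : List (A × NNReal)) :
    (shift1 v).map Prod.fst = v.map Prod.fst := by
  simp [shift1]

lemma shift1_map_snd (v : List (A × NNReal)) :
    (shift1 v).map Prod.snd = (v.map Prod.snd).map (· + 1) := by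
  simp [shift1]

lemma shift1_sublist {v w : List (A × NNReal)} (h : v.Sublist w) :
    (shift1 v).Sublist (shift1 w) := h.map _

lemma shift1_append (v w : List (A × NNReal)) :
    shift1 (v ++ w) = shift1 v ++ shift1 w := by simp [shift1]

lemma shift1_cons (p : A × NNReal) (v : List (A × NNReal)) :
    shift1 (p :: v) = (p.1, p.2 + 1) :: shift1 v := rfl

lemma sublist_concat_split {α : Type*} {l m : List α} {x : α}
    (h : (l ++ [x]).Sublist m) : ∃ p r, m = p ++ x :: r ∧ l.Sublist p := by
  obtain ⟨r₁, r₂, rfl, h1, h2⟩ := List.append_sublist_iff.mp h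
  have hx : x ∈ r₂ := h2.subset (by simp)
  obtain ⟨p', r', rfl⟩ := List.append_of_mem hx
  exact ⟨r₁ ++ p', r', by simp, h1.trans (List.sublist_append_left _ _)⟩

lemma pw_aux {x : NNReal} {l m : List NNReal} (hx : 0 < x)
    (h : List.Pairwise (· < ·) (x :: m)) (hl : l.Sublist m) :
    List.Pairwise (· < ·) (x / 2 :: l) := by
  rcases List.pairwise_cons.mp h with ⟨hxm, hm⟩
  exact List.pairwise_cons.mpr
    ⟨fun y hy => lt_trans (half_lt_self hx) (hxm y (hl.subset hy)),
     List.Pairwise.sublist hl hm⟩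

/-- The data of a lossy computation encoding, without the (determined) timed
word itself. -/
def EncData (S : ChannelSystem Q A) (qf : Q) (wf : List A) : Prop :=
  ∃ (n : ℕ) (q : ℕ → Q) (γ : ℕ → Q × ChanOp A × Q) (t' : ℕ → NNReal)
    (v : ℕ → List (A × NNReal)),
    1 ≤ n ∧
    q 0 = S.init ∧ v 0 = [] ∧
    q n = qf ∧ (v n).map Prod.fst = wf ∧
    (∀ i, 1 ≤ i → i ≤ n →
      γ i ∈ S.rules ∧ (γ i).1 = q (i - 1) ∧ (γ i).2.2 = q i) ∧
    (∀ i, 1 ≤ i → i ≤ n →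
      ((n - i : ℕ) : NNReal) < t' i ∧ t' i < ((n - i : ℕ) : NNReal) + 1 ∧
      List.Chain' (· < ·) (t' i :: (v i).map Prod.snd) ∧
      ∀ s ∈ (v i).map Prod.snd, s < ((n - i : ℕ) : NNReal) + 1) ∧
    (∀ i, 1 ≤ i → i ≤ n →
      match (γ i).2.1 with
      | ChanOp.eps => (shift1 (v i)).Sublist (v (i - 1))
      | ChanOp.write a =>
          (∃ u rest, v i = (a, u) :: rest ∧ (shift1 rest).Sublist (v (i - 1))) ∨
          (shift1 (v i)).Sublist (v (i - 1))
      | ChanOp.read a =>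
          ∃ (v₁ v₂ : List (A × NNReal)) (t : NNReal),
            v (i - 1) = v₁ ++ (a, t) :: v₂ ∧ (shift1 (v i)).Sublist v₁)

lemma exists_encoding_iff (S : ChannelSystem Q A) (qf : Q) (wf : List A) :
    (∃ w, IsLossyEncoding S qf wf w) ↔ EncData S qf wf := by
  constructor
  · rintro ⟨w, n, q, γ, t', v, h1, -, hrest⟩
    exact ⟨n, q, γ, t', v, h1, hrest⟩
  · rintro ⟨n, q, γ, t', v, h1, hrest⟩
    exact ⟨_, n, q, γ, t', v, h1, rfl, hrest⟩

lemma encData_reach (S : ChannelSystem Q A) {qf : Q} {wf : List A}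
    (h : EncData S qf wf) : LossyReach S (qf, wf) := by
  obtain ⟨n, q, γ, t', v, hn, hq0, hv0, hqn, hvn, hrules, hP2, hP3⟩ := h
  have key : ∀ i, i ≤ n → Relation.ReflTransGen
      (fun c₁ c₂ => ∃ γ, LossyStep S γ c₁ c₂)
      (S.init, []) (q i, (v i).map Prod.fst) := by
    intro i
    induction i with
    | zero =>
      intro _
      simp only [hq0, hv0, List.map_nil]
      exact Relation.ReflTransGen.refl
    | succ k ih =>
      intro hk
      have hk' : k ≤ n := Nat.le_of_succ_le hk
      have h1k : 1 ≤ k + 1 := Nat.le_add_left 1 k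
      obtain ⟨hmem, hg1, hg2⟩ := hrules (k + 1) h1k hk
      have h3 := hP3 (k + 1) h1k hk
      simp only [Nat.add_sub_cancel] at hg1 h3
      refine (ih hk').tail ⟨γ (k + 1), ?_⟩
      cases hop : (γ (k + 1)).2.1 with
      | eps =>
        rw [hop] at h3
        have h3' : (shift1 (v (k + 1))).Sublist (v k) := h3
        have hsub : ((v (k + 1)).map Prod.fst).Sublist ((v k).map Prod.fst) := by
          have := h3'.map Prod.fst
          rwa [shift1_map_fst] at this
        refine ⟨(v (k + 1)).map Prod.fst, (v (k + 1)).map Prod.fst, hsub,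
          ⟨hmem, hg1, hg2, ?_⟩, List.Sublist.refl _⟩
        rw [hop]
      | write a =>
        rw [hop] at h3
        have h3' : (∃ u rest, v (k + 1) = (a, u) :: rest ∧
            (shift1 rest).Sublist (v k)) ∨
            (shift1 (v (k + 1))).Sublist (v k) := h3
        rcases h3' with ⟨u0, rest, hvk, hsub⟩ | hsub
        · have hsub' : (rest.map Prod.fst).Sublist ((v k).map Prod.fst) := by
            have := hsub.map Prod.fst
            rwa [shift1_map_fst] at this
          refine ⟨rest.map Prod.fst, a :: rest.map Prod.fst, hsub',
            ⟨hmem, hg1, hg2, ?_⟩, ?_⟩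
          · rw [hop]
          · rw [hvk, List.map_cons]
        · have hsub' : ((v (k + 1)).map Prod.fst).Sublist ((v k).map Prod.fst) := by
            have := hsub.map Prod.fst
            rwa [shift1_map_fst] at this
          refine ⟨(v (k + 1)).map Prod.fst, a :: (v (k + 1)).map Prod.fst, hsub',
            ⟨hmem, hg1, hg2, ?_⟩, ?_⟩
          · rw [hop]
          · exact (List.Sublist.refl _).cons a
      | read a =>
        rw [hop] at h3
        have h3' : ∃ (v₁ v₂ : List (A × NNReal)) (t : NNReal),
            v k = v₁ ++ (a, t) :: v₂ ∧ (shift1 (v (k + 1))).Sublist v₁ := h3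
        obtain ⟨v₁, v₂, t, hvk, hsub⟩ := h3'
        have hsub' : ((v (k + 1)).map Prod.fst).Sublist (v₁.map Prod.fst) := by
          have := hsub.map Prod.fst
          rwa [shift1_map_fst] at this
        refine ⟨(v (k + 1)).map Prod.fst ++ [a], (v (k + 1)).map Prod.fst, ?_,
          ⟨hmem, hg1, hg2, ?_⟩, List.Sublist.refl _⟩
        · refine (hsub'.append_right [a]).trans ?_
          rw [hvk, List.map_append, List.map_cons]
          exact ((List.nil_sublist _).cons₂ a).append_left _
        · rw [hop]
  have := key n le_rfl
  rw [hqn, hvn] at this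
  exact this

/-- Extend a function on `{0, …, n}` by a new value elsewhere. -/
def extFun {α : Type*} (n : ℕ) (f : ℕ → α) (x : α) : ℕ → α :=
  fun i => if i ≤ n then f i else x

lemma extFun_le {α : Type*} {n i : ℕ} (h : i ≤ n) (f : ℕ → α) (x : α) :
    extFun n f x i = f i := if_pos h

lemma extFun_gt {α : Type*} {n i : ℕ} (h : ¬ i ≤ n) (f : ℕ → α) (x : α) :
    extFun n f x i = x := if_neg h

lemma encData_extend_core (S : ChannelSystem Q A)
    (n : ℕ) (q : ℕ → Q) (γ0 : ℕ → Q × ChanOp A × Q) (t' : ℕ → NNReal)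
    (v : ℕ → List (A × NNReal)) (b c : Q × List A) (g : Q × ChanOp A × Q)
    (hq0 : q 0 = S.init) (hv0 : v 0 = [])
    (hqn : q n = b.1) (hvn : (v n).map Prod.fst = b.2)
    (hrules : ∀ i, 1 ≤ i → i ≤ n →
      γ0 i ∈ S.rules ∧ (γ0 i).1 = q (i - 1) ∧ (γ0 i).2.2 = q i)
    (hP2 : ∀ i, 1 ≤ i → i ≤ n →
      ((n - i : ℕ) : NNReal) < t' i ∧ t' i < ((n - i : ℕ) : NNReal) + 1 ∧
      List.Chain' (· < ·) (t' i :: (v i).map Prod.snd) ∧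
      ∀ s ∈ (v i).map Prod.snd, s < ((n - i : ℕ) : NNReal) + 1)
    (ht0 : 0 < t' n) (ht1 : t' n < 1)
    (hpw : List.Pairwise (· < ·) (t' n :: (v n).map Prod.snd))
    (hbd : ∀ s ∈ (v n).map Prod.snd, s < 1)
    (hP3 : ∀ i, 1 ≤ i → i ≤ n →
      match (γ0 i).2.1 with
      | ChanOp.eps => (shift1 (v i)).Sublist (v (i - 1))
      | ChanOp.write a =>
          (∃ u rest, v i = (a, u) :: rest ∧ (shift1 rest).Sublist (v (i - 1))) ∨
          (shift1 (v i)).Sublist (v (i - 1))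
      | ChanOp.read a =>
          ∃ (v₁ v₂ : List (A × NNReal)) (t : NNReal),
            v (i - 1) = v₁ ++ (a, t) :: v₂ ∧ (shift1 (v i)).Sublist v₁)
    (hstep : LossyStep S g b c) : EncData S c.1 c.2 := by
  obtain ⟨u, u', hu, ⟨hmem, hg1, hg2, hm⟩, hc2⟩ := hstep
  rw [← hvn] at hu
  have key : ∃ newv : List (A × NNReal),
      newv.map Prod.fst = c.2 ∧
      List.Pairwise (· < ·) (t' n / 2 :: newv.map Prod.snd) ∧
      (∀ s ∈ newv.map Prod.snd, s < 1) ∧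
      (match g.2.1 with
      | ChanOp.eps => (shift1 newv).Sublist (shift1 (v n))
      | ChanOp.write a =>
          (∃ u0 rest, newv = (a, u0) :: rest ∧
            (shift1 rest).Sublist (shift1 (v n))) ∨
          (shift1 newv).Sublist (shift1 (v n))
      | ChanOp.read a =>
          ∃ (v₁ v₂ : List (A × NNReal)) (t : NNReal),
            shift1 (v n) = v₁ ++ (a, t) :: v₂ ∧ (shift1 newv).Sublist v₁) := by
    cases hop : g.2.1 with
    | eps =>
      rw [hop] at hm
      have hm' : u' = u := hm
      rw [hm'] at hc2
      have hsub : c.2.Sublist ((v n).map Prod.fst) := hc2.trans hu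
      obtain ⟨newv, hnv, hfst⟩ := List.sublist_map_iff.mp hsub
      exact ⟨newv, hfst.symm, pw_aux ht0 hpw (hnv.map _),
        fun s hs => hbd s ((hnv.map Prod.snd).subset hs),
        shift1_sublist hnv⟩
    | write a =>
      rw [hop] at hm
      have hm' : u' = a :: u := hm
      rw [hm'] at hc2
      rcases List.sublist_cons_iff.mp hc2 with h | ⟨r, hr, hrsub⟩
      · have hsub : c.2.Sublist ((v n).map Prod.fst) := h.trans hu
        obtain ⟨newv, hnv, hfst⟩ := List.sublist_map_iff.mp hsub
        exact ⟨newv, hfst.symm, pw_aux ht0 hpw (hnv.map _),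
          fun s hs => hbd s ((hnv.map Prod.snd).subset hs),
          Or.inr (shift1_sublist hnv)⟩
      · have hsub : r.Sublist ((v n).map Prod.fst) := hrsub.trans hu
        obtain ⟨rv, hrv, hfst⟩ := List.sublist_map_iff.mp hsub
        refine ⟨(a, t' n) :: rv, ?_, ?_, ?_,
          Or.inl ⟨t' n, rv, rfl, shift1_sublist hrv⟩⟩
        · rw [List.map_cons, ← hfst, ← hr]
        · rcases List.pairwise_cons.mp hpw with ⟨hxm, hm2⟩
          rw [List.map_cons]
          refine List.pairwise_cons.mpr ⟨?_, List.pairwise_cons.mpr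
            ⟨fun y hy => hxm y ((hrv.map Prod.snd).subset hy),
             List.Pairwise.sublist (hrv.map _) hm2⟩⟩
          intro y hy
          rcases List.mem_cons.mp hy with rfl | hy
          · exact half_lt_self ht0
          · exact lt_trans (half_lt_self ht0) (hxm y ((hrv.map Prod.snd).subset hy))
        · rw [List.map_cons]
          intro s hs
          rcases List.mem_cons.mp hs with rfl | hs
          · exact ht1
          · exact hbd s ((hrv.map Prod.snd).subset hs)
    | read a =>
      rw [hop] at hm
      have hm' : u = u' ++ [a] := hm
      rw [hm'] at hu
      obtain ⟨s, hsv, hfst⟩ := List.sublist_map_iff.mp hu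
      obtain ⟨s₁, s₂, rfl, hf1, hf2⟩ := List.map_eq_append_iff.mp hfst.symm
      obtain ⟨p0, l0, rfl, hpa, hl0⟩ := List.map_eq_cons_iff.mp hf2
      have hl0' : l0 = [] := by simpa using hl0
      subst hl0'
      obtain ⟨p, r, hv_eq, hs1p⟩ := sublist_concat_split hsv
      have hcp : c.2.Sublist (p.map Prod.fst) := by
        rw [← hf1] at hc2
        exact hc2.trans (hs1p.map _)
      obtain ⟨newv, hnv, hnf⟩ := List.sublist_map_iff.mp hcp
      have hnvn : newv.Sublist (v n) := hnv.trans (by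
        rw [hv_eq]; exact List.sublist_append_left _ _)
      refine ⟨newv, hnf.symm, pw_aux ht0 hpw (hnvn.map _),
        fun x hx => hbd x ((hnvn.map Prod.snd).subset hx), ?_⟩
      refine ⟨shift1 p, shift1 r, p0.2 + 1, ?_, shift1_sublist hnv⟩
      rw [hv_eq, shift1_append, shift1_cons, hpa]
  obtain ⟨newv, hcfst, hpw', hbd', hmtch⟩ := key
  have hnot : ¬ (n + 1 ≤ n) := by omega
  refine ⟨n + 1, extFun n q c.1, extFun n γ0 g,
    extFun n (fun i => t' i + 1) (t' n / 2),
    extFun n (fun i => shift1 (v i)) newv, Nat.le_add_left 1 n, ?_, ?_, ?_, ?_, ?_, ?_, ?_⟩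
  · rw [extFun_le (Nat.zero_le n), hq0]
  · simp only [extFun_le (Nat.zero_le n), hv0, shift1, List.map_nil]
  · rw [extFun_gt hnot]
  · rw [extFun_gt hnot]
    exact hcfst
  · intro i h1 hi
    by_cases hin : i ≤ n
    · have hi1 : i - 1 ≤ n := by omega
      obtain ⟨hA, hB, hC⟩ := hrules i h1 hin
      rw [extFun_le hin, extFun_le hi1, extFun_le hin]
      exact ⟨hA, hB, hC⟩
    · have hi' : i = n + 1 := by omega
      subst hi'
      rw [extFun_gt hnot, Nat.add_sub_cancel, extFun_le le_rfl,
        extFun_gt hnot]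
      exact ⟨hmem, hg1.trans hqn.symm, hg2⟩
  · intro i h1 hi
    by_cases hin : i ≤ n
    · obtain ⟨hA, hB, hC, hD⟩ := hP2 i h1 hin
      have hcast : ((n + 1 - i : ℕ) : NNReal) = ((n - i : ℕ) : NNReal) + 1 := by
        have h' : n + 1 - i = (n - i) + 1 := by omega
        rw [h']
        push_cast
        ring
      simp only [extFun_le hin]
      rw [hcast, shift1_map_snd]
      refine ⟨(add_lt_add_iff_right 1).mpr hA, (add_lt_add_iff_right 1).mpr hB, ?_, ?_⟩
      · unfold List.Chain' at hC ⊢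
        rw [List.isChain_iff_pairwise] at hC ⊢
        have heq : ((t' i + 1) :: ((v i).map Prod.snd).map (· + 1)) =
            (t' i :: (v i).map Prod.snd).map (· + 1) := rfl
        rw [heq, List.pairwise_map]
        exact hC.imp (fun h => (add_lt_add_iff_right 1).mpr h)
      · intro s hs
        rw [List.mem_map] at hs
        obtain ⟨s0, hs0, rfl⟩ := hs
        exact (add_lt_add_iff_right 1).mpr (hD s0 hs0)
    · have hi' : i = n + 1 := by omega
      subst hi'
      have hz : ((n + 1 - (n + 1) : ℕ) : NNReal) = 0 := by simp
      rw [extFun_gt hnot, extFun_gt hnot, hz, zero_add]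
      refine ⟨div_pos ht0 two_pos,
        lt_of_le_of_lt (half_le_self (by positivity)) ht1, ?_, hbd'⟩
      unfold List.Chain'
      rw [List.isChain_iff_pairwise]
      exact hpw'
  · intro i h1 hi
    by_cases hin : i ≤ n
    · have hi1 : i - 1 ≤ n := by omega
      have h3 := hP3 i h1 hin
      simp only [extFun_le hin, extFun_le hi1]
      cases hop2 : (γ0 i).2.1 with
      | eps =>
        rw [hop2] at h3
        have h3' : (shift1 (v i)).Sublist (v (i - 1)) := h3
        exact shift1_sublist h3'
      | write a =>
        rw [hop2] at h3
        have h3' : (∃ u0 rest, v i = (a, u0) :: rest ∧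
            (shift1 rest).Sublist (v (i - 1))) ∨
            (shift1 (v i)).Sublist (v (i - 1)) := h3
        rcases h3' with ⟨u0, rest, heq, hsub⟩ | hsub
        · exact Or.inl ⟨u0 + 1, shift1 rest, by rw [heq, shift1_cons],
            shift1_sublist hsub⟩
        · exact Or.inr (shift1_sublist hsub)
      | read a =>
        rw [hop2] at h3
        have h3' : ∃ (v₁ v₂ : List (A × NNReal)) (t : NNReal),
            v (i - 1) = v₁ ++ (a, t) :: v₂ ∧ (shift1 (v i)).Sublist v₁ := h3
        obtain ⟨v₁, v₂, t, heq, hsub⟩ := h3'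
        exact ⟨shift1 v₁, shift1 v₂, t + 1,
          by rw [heq, shift1_append, shift1_cons], shift1_sublist hsub⟩
    · have hi' : i = n + 1 := by omega
      subst hi'
      simp only [extFun_gt hnot, Nat.add_sub_cancel, extFun_le le_rfl]
      exact hmtch

lemma encData_extend (S : ChannelSystem Q A) {b c : Q × List A}
    {g : Q × ChanOp A × Q}
    (h : EncData S b.1 b.2) (hstep : LossyStep S g b c) : EncData S c.1 c.2 := by
  obtain ⟨n, q, γ0, t', v, hn, hq0, hv0, hqn, hvn, hrules, hP2, hP3⟩ := h
  obtain ⟨hA, hB, hC, hD⟩ := hP2 n hn le_rfl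
  have hz : ((n - n : ℕ) : NNReal) = 0 := by simp
  rw [hz, zero_add] at hB
  rw [hz] at hA
  unfold List.Chain' at hC
  rw [List.isChain_iff_pairwise] at hC
  refine encData_extend_core S n q γ0 t' v b c g hq0 hv0 hqn hvn hrules hP2
    hA hB hC (fun s hs => ?_) hP3 hstep
  have := hD s hs
  rwa [hz, zero_add] at this

lemma encData_base (S : ChannelSystem Q A) {c : Q × List A}
    {g : Q × ChanOp A × Q}
    (hstep : LossyStep S g (S.init, []) c) : EncData S c.1 c.2 := by
  refine encData_extend_core S 0 (fun _ => S.init) (fun _ => g)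
    (fun _ => 1 / 2) (fun _ => []) (S.init, []) c g rfl rfl rfl rfl
    ?_ ?_ ?_ ?_ ?_ ?_ ?_ hstep
  · intro i h1 hi
    exact absurd (h1.trans hi) (by omega)
  · intro i h1 hi
    exact absurd (h1.trans hi) (by omega)
  · norm_num
  · exact (div_lt_one (by norm_num)).mpr (by norm_num)
  · simp
  · simp
  · intro i h1 hi
    exact absurd (h1.trans hi) (by omega)

lemma reach_enc (S : ChannelSystem Q A) {c : Q × List A} (h : LossyReach S c) :
    c = (S.init, []) ∨ EncData S c.1 c.2 := by
  induction h with
  | refl => exact Or.inl rfl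
  | tail _ hbc ih =>
    obtain ⟨g, hstep⟩ := hbc
    right
    rcases ih with rfl | henc
    · exact encData_base S hstep
    · exact encData_extend S henc hstep

end LossyAux

/-- A channel system `S` has a lossy computation ending in
the configuration `(qf, wf)` iff there exists a lossy computation encoding
ending in `(qf, wf)`. -/
theorem lossy_computation_iff_encoding
    {Q A : Type} [Fintype Q] [Fintype A] (S : ChannelSystem Q A)
    (qf : Q) (wf : List A) (hqf : qf ≠ S.init) :
    LossyReach S (qf, wf) ↔ ∃ w, IsLossyEncoding S qf wf w := by
  constructor
  · intro h
    rcases reach_enc S h with heq | henc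
    · exact absurd (congrArg Prod.fst heq) hqf
    · exact (exists_encoding_iff S qf wf).mpr henc
  · intro h
    exact encData_reach S ((exists_encoding_iff S qf wf).mp h)
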